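/- In the counterexample instance (n agents, 2n−1 items as specified), every allocation that gives each agent a positive fraction of his WMMS gives agent a_n a bundle of value at most 1/n + nε, hence no allocation is better than (1/n + nε)/(1−(n−1)ε)-WMMS; in particular, for every δ > 0 there exists ε > 0 such that no allocation in this instance is (1/n + δ)-WMMS. -/

import Mathlib

open Finset

/-- Entitlements of the counterexample instance: `e_i = ε` for `i < n`,
`e_n = 1 − (n−1)ε` (0-based: the last agent has index `n−1`). -/
noncomputable def ent (n : ℕ) (ε : ℝ) (i : Fin n) : ℝ :=
  if (i : ℕ) < n - 1 then ε else 1 - ((n : ℝ) - 1) * ε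

/-- Valuations of the counterexample instance with `2n−1` items. -/
noncomputable def val (n : ℕ) (ε : ℝ) (i : Fin n) (j : Fin (2 * n - 1)) : ℝ :=
  if (i : ℕ) < n - 1 then
    (if (j : ℕ) < n - 1 then ε
     else if (j : ℕ) = n - 1 then 1 - ((n : ℝ) - 1) * ε else 0)
  else (if (j : ℕ) < n then (1 - ((n : ℝ) - 1) * ε) / n else ε)

/-- The weighted maxmin shares in the counterexample:
`WMMS_i = ε` for `i < n` and `WMMS_n = 1 − (n−1)ε`. -/
noncomputable def wmmsVal (n : ℕ) (ε : ℝ) (i : Fin n) : ℝ :=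
  if (i : ℕ) < n - 1 then ε else 1 - ((n : ℝ) - 1) * ε

/-- The value of agent `i`'s bundle under the allocation `f` (an allocation is
an ordered partition, encoded as an assignment of items to agents). -/
noncomputable def bundleVal (n : ℕ) (ε : ℝ) (f : Fin (2 * n - 1) → Fin n)
    (i : Fin n) : ℝ :=
  ∑ b ∈ Finset.univ.filter (fun b => f b = i), val n ε i b

/-- In the counterexample instance: (i) every allocation giving each agent a
positive value (a positive fraction of his WMMS) gives the last agent at most
`1/n + nε`; (ii) hence no allocation is better than
`(1/n + nε)/(1−(n−1)ε)`-WMMS; (iii) in particular, for every `δ > 0` there is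
`ε > 0` such that no allocation is `(1/n + δ)`-WMMS. -/
lemma key (n : ℕ) (hn : 2 ≤ n) (ε : ℝ) (hε : 0 < ε) (hε2 : ε < 1 / (n : ℝ) ^ 2)
    (f : Fin (2 * n - 1) → Fin n) (hpos : ∀ i : Fin n, 0 < bundleVal n ε f i) :
    bundleVal n ε f ⟨n - 1, Nat.sub_one_lt (by omega)⟩ ≤ 1 / (n : ℝ) + n * ε := by
  have hn' : (2:ℝ) ≤ (n:ℝ) := by exact_mod_cast hn
  have hn0 : (0:ℝ) < n := by linarith
  have hεn : ε * (n:ℝ)^2 < 1 := (lt_div_iff₀ (by positivity)).mp hε2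
  have hQ : 0 < 1 - ((n:ℝ)-1)*ε := by nlinarith [mul_pos hε hn0]
  set L : Fin n := ⟨n-1, by omega⟩ with hL
  have hLval : (L : ℕ) = n - 1 := rfl
  have hLnot : ¬ ((L:ℕ) < n - 1) := by rw [hLval]; omega
  have hvalL : ∀ b : Fin (2*n-1), val n ε L b =
      if (b:ℕ) < n then (1 - ((n:ℝ)-1)*ε)/n else ε := by
    intro b; unfold _root_.val; rw [if_neg hLnot]
  set T : Finset (Fin (2*n-1)) := univ.filter (fun b : Fin (2*n-1) => (b:ℕ) < n) with hT
  have hTcard : T.card = n := by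
    have hmap : T = Finset.map ⟨Fin.castLE (by omega : n ≤ 2*n-1),
        Fin.castLE_injective _⟩ univ := by
      ext b
      simp only [hT, mem_filter, mem_univ, true_and, mem_map,
        Function.Embedding.coeFn_mk]
      constructor
      · intro hb; exact ⟨⟨b, hb⟩, by simp⟩
      · rintro ⟨a, -, rfl⟩; exact a.2
    rw [hmap, Finset.card_map, Finset.card_univ, Fintype.card_fin]
  have hfib : T.card = ∑ i : Fin n, (T.filter (fun b => f b = i)).card :=
    Finset.card_eq_sum_card_fiberwise (fun b _ => mem_univ _)
  have hge : ∀ i ∈ univ.erase L, 1 ≤ (T.filter (fun b => f b = i)).card := by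
    intro i hi
    have hiL : (i:ℕ) < n - 1 := by
      rcases Finset.mem_erase.mp hi with ⟨hne, -⟩
      have h2 := i.2
      by_contra h; push_neg at h
      exact hne (Fin.ext (by simp only [hLval]; omega))
    have hp := hpos i
    rw [bundleVal] at hp
    obtain ⟨b, hb, hbval⟩ : ∃ b ∈ univ.filter (fun b => f b = i), 0 < val n ε i b := by
      by_contra h; push_neg at h
      exact absurd (Finset.sum_nonpos (fun b hb => h b hb)) (not_le.mpr hp)
    have hfb : f b = i := (Finset.mem_filter.mp hb).2
    have hbn : (b:ℕ) < n := by
      by_contra hbn; push_neg at hbn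
      unfold _root_.val at hbval
      rw [if_pos hiL, if_neg (by omega), if_neg (by omega)] at hbval
      exact lt_irrefl 0 hbval
    rw [Finset.one_le_card]
    exact ⟨b, Finset.mem_filter.mpr ⟨Finset.mem_filter.mpr ⟨mem_univ _, hbn⟩, hfb⟩⟩
  have hcardL : (T.filter (fun b => f b = L)).card ≤ 1 := by
    have h1 : (univ.erase L).card ≤
        ∑ i ∈ univ.erase L, (T.filter (fun b => f b = i)).card := by
      simpa using Finset.sum_le_sum hge
    have h2 : ∑ i ∈ univ.erase L, (T.filter (fun b => f b = i)).card
        + (T.filter (fun b => f b = L)).card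
        = ∑ i : Fin n, (T.filter (fun b => f b = i)).card :=
      Finset.sum_erase_add _ _ (mem_univ L)
    have h3 : (univ.erase L).card = n - 1 := by
      rw [Finset.card_erase_of_mem (mem_univ _), Finset.card_univ, Fintype.card_fin]
    omega
  -- split bundle
  have hsplit : bundleVal n ε f L =
      (∑ b ∈ (univ.filter (fun b => f b = L)).filter (fun b : Fin (2*n-1) => (b:ℕ) < n),
        val n ε L b)
      + ∑ b ∈ (univ.filter (fun b => f b = L)).filter (fun b : Fin (2*n-1) => ¬ (b:ℕ) < n),
        val n ε L b :=
    (Finset.sum_filter_add_sum_filter_not _ _ _).symm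
  have hAeq : (univ.filter (fun b => f b = L)).filter (fun b : Fin (2*n-1) => (b:ℕ) < n)
      = T.filter (fun b => f b = L) := by
    ext b; simp [hT, and_comm]
  have hsumA : ∑ b ∈ T.filter (fun b => f b = L), val n ε L b
      ≤ (1 - ((n:ℝ)-1)*ε)/n := by
    have hle : ∀ b ∈ T.filter (fun b => f b = L), val n ε L b ≤ (1 - ((n:ℝ)-1)*ε)/n := by
      intro b hb
      have hbn : (b:ℕ) < n := (Finset.mem_filter.mp (Finset.mem_filter.mp hb).1).2
      rw [hvalL, if_pos hbn]
    have h := Finset.sum_le_card_nsmul _ _ _ hle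
    rw [nsmul_eq_mul] at h
    have hC : (0:ℝ) ≤ (1 - ((n:ℝ)-1)*ε)/n := div_nonneg hQ.le hn0.le
    have hcast : (((T.filter (fun b => f b = L)).card : ℝ)) ≤ 1 := by exact_mod_cast hcardL
    nlinarith
  have hBcard : ((univ.filter (fun b => f b = L)).filter
      (fun b : Fin (2*n-1) => ¬ (b:ℕ) < n)).card ≤ n - 1 := by
    have hsub : (univ.filter (fun b => f b = L)).filter (fun b : Fin (2*n-1) => ¬ (b:ℕ) < n)
        ⊆ univ.filter (fun b : Fin (2*n-1) => ¬ (b:ℕ) < n) :=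
      Finset.filter_subset_filter _ (Finset.filter_subset _ _)
    have hcompl := Finset.card_filter_add_card_filter_not
      (s := (univ : Finset (Fin (2*n-1)))) (p := fun b : Fin (2*n-1) => (b:ℕ) < n)
    have hu : (univ : Finset (Fin (2*n-1))).card = 2*n-1 := by
      rw [Finset.card_univ, Fintype.card_fin]
    have hle := Finset.card_le_card hsub
    have hTc' : (univ.filter (fun b : Fin (2*n-1) => (b:ℕ) < n)).card = n := hTcard
    omega
  have hsumB : ∑ b ∈ (univ.filter (fun b => f b = L)).filter
      (fun b : Fin (2*n-1) => ¬ (b:ℕ) < n), val n ε L b ≤ ((n:ℝ)-1) * ε := by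
    have hle : ∀ b ∈ (univ.filter (fun b => f b = L)).filter
        (fun b : Fin (2*n-1) => ¬ (b:ℕ) < n), val n ε L b ≤ ε := by
      intro b hb
      have hbn : ¬ (b:ℕ) < n := (Finset.mem_filter.mp hb).2
      rw [hvalL, if_neg hbn]
    have h := Finset.sum_le_card_nsmul _ _ _ hle
    rw [nsmul_eq_mul] at h
    have hcast : ((((univ.filter (fun b => f b = L)).filter
        (fun b : Fin (2*n-1) => ¬ (b:ℕ) < n)).card : ℝ)) ≤ (n:ℝ) - 1 := by
      have h1 : ((((univ.filter (fun b => f b = L)).filter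
          (fun b : Fin (2*n-1) => ¬ (b:ℕ) < n)).card : ℝ)) ≤ ((n - 1 : ℕ) : ℝ) := by
        exact_mod_cast hBcard
      rwa [Nat.cast_sub (by omega), Nat.cast_one] at h1
    nlinarith
  rw [hsplit, hAeq]
  have hdiv : (1 - ((n:ℝ)-1)*ε)/n ≤ 1/n := by
    gcongr
    nlinarith
  nlinarith

theorem stmt_4 (n : ℕ) (hn : 2 ≤ n) :
    (∀ ε : ℝ, 0 < ε → ε < 1 / (n : ℝ) ^ 2 →
      ∀ f : Fin (2 * n - 1) → Fin n,
        (∀ i : Fin n, 0 < bundleVal n ε f i) →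
        bundleVal n ε f ⟨n - 1, by omega⟩ ≤ 1 / (n : ℝ) + n * ε) ∧
    (∀ ε : ℝ, 0 < ε → ε < 1 / (n : ℝ) ^ 2 →
      ∀ α : ℝ, (1 / (n : ℝ) + n * ε) / (1 - ((n : ℝ) - 1) * ε) < α →
        ∀ f : Fin (2 * n - 1) → Fin n,
          ¬ (∀ i : Fin n, α * wmmsVal n ε i ≤ bundleVal n ε f i)) ∧
    (∀ δ : ℝ, 0 < δ → ∃ ε : ℝ, 0 < ε ∧
      ∀ f : Fin (2 * n - 1) → Fin n,
        ¬ (∀ i : Fin n, (1 / (n : ℝ) + δ) * wmmsVal n ε i ≤ bundleVal n ε f i)) := by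
  have hn' : (2:ℝ) ≤ (n:ℝ) := by exact_mod_cast hn
  have hn0 : (0:ℝ) < n := by linarith
  have part2 : (∀ ε : ℝ, 0 < ε → ε < 1 / (n : ℝ) ^ 2 →
      ∀ α : ℝ, (1 / (n : ℝ) + n * ε) / (1 - ((n : ℝ) - 1) * ε) < α →
        ∀ f : Fin (2 * n - 1) → Fin n,
          ¬ (∀ i : Fin n, α * wmmsVal n ε i ≤ bundleVal n ε f i)) := by
    intro ε hε hε2 α hα f h
    have hεn : ε * (n:ℝ)^2 < 1 := (lt_div_iff₀ (by positivity)).mp hε2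
    have hQ : 0 < 1 - ((n:ℝ)-1)*ε := by nlinarith [mul_pos hε hn0]
    have hnum : 0 < 1/(n:ℝ) + n*ε := by positivity
    have hα0 : 0 < α := lt_trans (div_pos hnum hQ) hα
    have hw : ∀ i : Fin n, 0 < wmmsVal n ε i := by
      intro i; unfold wmmsVal; split
      · exact hε
      · exact hQ
    have hpos : ∀ i, 0 < bundleVal n ε f i :=
      fun i => lt_of_lt_of_le (mul_pos hα0 (hw i)) (h i)
    have hkey := key n hn ε hε hε2 f hpos
    have hwL : wmmsVal n ε ⟨n-1, by omega⟩ = 1 - ((n:ℝ)-1)*ε := by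
      unfold wmmsVal; rw [if_neg (by simp)]
    have hhL := h ⟨n-1, by omega⟩
    rw [hwL] at hhL
    have hd := (div_lt_iff₀ hQ).mp hα
    nlinarith
  refine ⟨fun ε hε hε2 f hpos => key n hn ε hε hε2 f hpos, part2, ?_⟩
  intro δ hδ
  have hc : (0:ℝ) < n + (1/n + δ)*((n:ℝ)-1) := by
    nlinarith [mul_pos (show 0 < 1/(n:ℝ)+δ by positivity)
      (show (0:ℝ) < (n:ℝ)-1 by linarith)]
  obtain ⟨c, hcdef, hc⟩ : ∃ c : ℝ, c = n + (1/n + δ)*((n:ℝ)-1) ∧ 0 < c := ⟨_, rfl, hc⟩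
  obtain ⟨ε, hε, hεa, hεb⟩ : ∃ ε : ℝ, 0 < ε ∧ ε ≤ δ/(2*c) ∧ ε ≤ 1/(2*(n:ℝ)^2) :=
    ⟨min (δ/(2*c)) (1/(2*(n:ℝ)^2)), lt_min (by positivity) (by positivity),
      min_le_left _ _, min_le_right _ _⟩
  refine ⟨ε, hε, ?_⟩
  intro f
  have hε2 : ε < 1 / (n:ℝ)^2 := by
    calc ε ≤ 1/(2*(n:ℝ)^2) := hεb
    _ < 1/(n:ℝ)^2 := by
      apply div_lt_div_of_pos_left one_pos (by positivity)
      nlinarith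
  have hQ : 0 < 1 - ((n:ℝ)-1)*ε := by
    have hεn : ε * (n:ℝ)^2 < 1 := (lt_div_iff₀ (by positivity)).mp hε2
    nlinarith [mul_pos hε hn0]
  have hεc : ε * c < δ := by
    have h2 : ε * c ≤ (δ/(2*c)) * c := mul_le_mul_of_nonneg_right hεa hc.le
    have h3 : (δ/(2*c)) * c = δ/2 := by field_simp
    linarith
  apply part2 ε hε hε2 (1/(n:ℝ) + δ) ?_ f
  rw [div_lt_iff₀ hQ]
  rw [hcdef] at hεc
  nlinarith [hεc]
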